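/- Let T be a bimonad (opmonoidal monad) on a monoidal category C. Then the Eilenberg–Moore category of T-modules carries a monoidal structure lifting that of C: the tensor product of modules (m, r) and (m', r') is (m ⊗ m', (r ⊗ r') ∘ σ²_{m,m'} : T(m ⊗ m') → m ⊗ m'), the unit is (𝟙, σ⁰ : T 𝟙 → 𝟙), the associators and unitors are those of C, and the forgetful functor U_T is strict (strong) monoidal with respect to this structure. -/

import Mathlib

open CategoryTheory MonoidalCategory

namespace BimonadAux

universe v u
variable {C : Type u} [Category.{v} C] [MonoidalCategory C] (T : Monad C)

/-- Bundled bimonad data. -/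
structure Data (T : Monad C) where
  σ2 : ∀ x y : C, T.obj (x ⊗ y) ⟶ T.obj x ⊗ T.obj y
  σ0 : T.obj (𝟙_ C) ⟶ 𝟙_ C
  σ2_natural : ∀ {x y x' y' : C} (f : x ⟶ x') (g : y ⟶ y'),
      T.map (f ⊗ₘ g) ≫ σ2 x' y' = σ2 x y ≫ (T.map f ⊗ₘ T.map g)
  σ2_assoc : ∀ x y z : C,
      σ2 (x ⊗ y) z ≫ (σ2 x y ⊗ₘ 𝟙 (T.obj z)) ≫ (α_ (T.obj x) (T.obj y) (T.obj z)).hom =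
        T.map (α_ x y z).hom ≫ σ2 x (y ⊗ z) ≫ (𝟙 (T.obj x) ⊗ₘ σ2 y z)
  σ2_left_unit : ∀ x : C,
      σ2 (𝟙_ C) x ≫ (σ0 ⊗ₘ 𝟙 (T.obj x)) ≫ (λ_ (T.obj x)).hom = T.map (λ_ x).hom
  σ2_right_unit : ∀ x : C,
      σ2 x (𝟙_ C) ≫ (𝟙 (T.obj x) ⊗ₘ σ0) ≫ (ρ_ (T.obj x)).hom = T.map (ρ_ x).hom
  BM1 : ∀ x y : C, T.μ.app (x ⊗ y) ≫ σ2 x y =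
      T.map (σ2 x y) ≫ σ2 (T.obj x) (T.obj y) ≫ (T.μ.app x ⊗ₘ T.μ.app y)
  BM2 : T.μ.app (𝟙_ C) ≫ σ0 = T.map σ0 ≫ σ0
  BM3 : ∀ x y : C, T.η.app (x ⊗ y) ≫ σ2 x y = (T.η.app x ⊗ₘ T.η.app y)
  BM4 : T.η.app (𝟙_ C) ≫ σ0 = 𝟙 (𝟙_ C)

variable (d : Data T)

/-- Tensor product of algebras. -/
def tObj (X Y : T.Algebra) : T.Algebra where
  A := X.A ⊗ Y.A
  a := d.σ2 X.A Y.A ≫ (X.a ⊗ₘ Y.a)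
  unit := by
    rw [← Category.assoc, d.BM3, tensorHom_comp_tensorHom, X.unit, Y.unit]
    exact id_tensorHom_id X.A Y.A
  assoc := by
    rw [← Category.assoc, d.BM1, T.map_comp]
    slice_lhs 3 4 => rw [tensorHom_comp_tensorHom, X.assoc, Y.assoc, ← tensorHom_comp_tensorHom]
    slice_lhs 2 3 => rw [← d.σ2_natural]
    simp

/-- Tensor unit algebra. -/
def tUnit : T.Algebra where
  A := 𝟙_ C
  a := d.σ0
  unit := d.BM4
  assoc := d.BM2

/-- Tensor product of morphisms. -/
def tHom {X Y X' Y' : T.Algebra} (f : X ⟶ X') (g : Y ⟶ Y') :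
    tObj T d X Y ⟶ tObj T d X' Y' where
  f := f.f ⊗ₘ g.f
  h := by
    dsimp [tObj]
    rw [← Category.assoc, d.σ2_natural, Category.assoc, tensorHom_comp_tensorHom, f.h, g.h,
      ← tensorHom_comp_tensorHom]
    simp

/-- Associator. -/
def tAssoc (X Y Z : T.Algebra) : tObj T d (tObj T d X Y) Z ≅ tObj T d X (tObj T d Y Z) :=
  Monad.Algebra.isoMk (α_ X.A Y.A Z.A) (by
    dsimp [tObj]
    have h1 : (X.a ⊗ₘ (d.σ2 Y.A Z.A ≫ (Y.a ⊗ₘ Z.a))) =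
        (𝟙 (T.obj X.A) ⊗ₘ d.σ2 Y.A Z.A) ≫ (X.a ⊗ₘ (Y.a ⊗ₘ Z.a)) := by
      rw [tensorHom_comp_tensorHom, Category.id_comp]
    have h2 : ((d.σ2 X.A Y.A ≫ (X.a ⊗ₘ Y.a)) ⊗ₘ Z.a) =
        (d.σ2 X.A Y.A ⊗ₘ 𝟙 (T.obj Z.A)) ≫ ((X.a ⊗ₘ Y.a) ⊗ₘ Z.a) := by
      rw [tensorHom_comp_tensorHom, Category.id_comp]
    rw [h1, h2]
    slice_lhs 1 3 => rw [← d.σ2_assoc]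
    slice_lhs 3 4 => rw [← associator_naturality]
    simp)

/-- Left unitor. -/
def tLeft (X : T.Algebra) : tObj T d (tUnit T d) X ≅ X :=
  Monad.Algebra.isoMk (λ_ X.A) (by
    dsimp [tObj, tUnit]
    have h1 : (d.σ0 ⊗ₘ X.a) = (d.σ0 ⊗ₘ 𝟙 (T.obj X.A)) ≫ (𝟙 (𝟙_ C) ⊗ₘ X.a) := by
      rw [tensorHom_comp_tensorHom]; simp
    rw [h1]
    slice_rhs 3 4 => rw [id_tensorHom, leftUnitor_naturality]
    slice_rhs 1 3 => rw [d.σ2_left_unit])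

/-- Right unitor. -/
def tRight (X : T.Algebra) : tObj T d X (tUnit T d) ≅ X :=
  Monad.Algebra.isoMk (ρ_ X.A) (by
    dsimp [tObj, tUnit]
    have h1 : (X.a ⊗ₘ d.σ0) = (𝟙 (T.obj X.A) ⊗ₘ d.σ0) ≫ (X.a ⊗ₘ 𝟙 (𝟙_ C)) := by
      rw [tensorHom_comp_tensorHom]; simp
    rw [h1]
    slice_rhs 3 4 => rw [tensorHom_id, rightUnitor_naturality]
    slice_rhs 1 3 => rw [d.σ2_right_unit])

def struct : MonoidalCategoryStruct T.Algebra where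
  tensorObj := tObj T d
  tensorUnit := tUnit T d
  tensorHom := tHom T d
  whiskerLeft X _ _ f := tHom T d (𝟙 X) f
  whiskerRight f Y := tHom T d f (𝟙 Y)
  associator := tAssoc T d
  leftUnitor := tLeft T d
  rightUnitor := tRight T d

/-- The lifted monoidal category. -/
def monoidal : MonoidalCategory T.Algebra :=
  @MonoidalCategory.ofTensorHom T.Algebra _ (struct T d)
    (id_tensorHom_id := by intros; ext; exact id_tensorHom_id _ _)
    (id_tensorHom := by intros; rfl)
    (tensorHom_id := by intros; rfl)
    (tensorHom_comp_tensorHom := by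
      intros; ext; unfold struct; simp [struct, tHom, tObj, ← tensorHom_comp_tensorHom])
    (associator_naturality := by
      intros; ext; unfold struct; simp [struct, tHom, tObj, tAssoc, associator_naturality]; unfold Monad.Algebra.isoMk; simp [tAssoc, associator_naturality])
    (leftUnitor_naturality := by
      intros; ext; unfold struct; simp [struct, tHom, tObj, tUnit, tLeft]; unfold Monad.Algebra.isoMk; simp [tUnit, tLeft])
    (rightUnitor_naturality := by
      intros; ext; unfold struct; simp [struct, tHom, tObj, tUnit, tRight]; unfold Monad.Algebra.isoMk; simp [tUnit, tRight])
    (pentagon := by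
      intros; ext; unfold struct; simp [struct, tHom, tObj, tAssoc, pentagon]; unfold Monad.Algebra.isoMk; simp [tAssoc, pentagon])
    (triangle := by
      intros; ext; unfold struct; simp [struct, tHom, tObj, tUnit, tAssoc, tLeft, tRight]; unfold Monad.Algebra.isoMk; simp [tUnit, tAssoc, tLeft, tRight])

end BimonadAux


/-- Moerdijk's theorem (existence part): if `T` is a bimonad (opmonoidal monad) on a
monoidal category `C` — a monad with an oplax monoidal structure `(σ², σ⁰)` for which
`μ` and `ι` are opmonoidal — then the Eilenberg–Moore category of `T`-modules carries a
monoidal structure lifting that of `C`: the tensor product of `(m,r)` and `(m',r')` has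
underlying object `m ⊗ m'` and action `(r ⊗ r') ∘ σ²`, the unit is `(𝟙, σ⁰)`, and the
associators and unitors are those of `C` (so the forgetful functor is strict monoidal). -/
theorem bimonad_lifts_monoidal_structure {C : Type*} [Category C] [MonoidalCategory C]
    (T : Monad C)
    (σ2 : ∀ x y : C, T.obj (x ⊗ y) ⟶ T.obj x ⊗ T.obj y)
    (σ0 : T.obj (𝟙_ C) ⟶ 𝟙_ C)
    (σ2_natural : ∀ {x y x' y' : C} (f : x ⟶ x') (g : y ⟶ y'),
      T.map (f ⊗ₘ g) ≫ σ2 x' y' = σ2 x y ≫ (T.map f ⊗ₘ T.map g))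
    (σ2_assoc : ∀ x y z : C,
      σ2 (x ⊗ y) z ≫ (σ2 x y ⊗ₘ 𝟙 (T.obj z)) ≫ (α_ (T.obj x) (T.obj y) (T.obj z)).hom =
        T.map (α_ x y z).hom ≫ σ2 x (y ⊗ z) ≫ (𝟙 (T.obj x) ⊗ₘ σ2 y z))
    (σ2_left_unit : ∀ x : C,
      σ2 (𝟙_ C) x ≫ (σ0 ⊗ₘ 𝟙 (T.obj x)) ≫ (λ_ (T.obj x)).hom = T.map (λ_ x).hom)
    (σ2_right_unit : ∀ x : C,
      σ2 x (𝟙_ C) ≫ (𝟙 (T.obj x) ⊗ₘ σ0) ≫ (ρ_ (T.obj x)).hom = T.map (ρ_ x).hom)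
    (BM1 : ∀ x y : C, T.μ.app (x ⊗ y) ≫ σ2 x y =
      T.map (σ2 x y) ≫ σ2 (T.obj x) (T.obj y) ≫ (T.μ.app x ⊗ₘ T.μ.app y))
    (BM2 : T.μ.app (𝟙_ C) ≫ σ0 = T.map σ0 ≫ σ0)
    (BM3 : ∀ x y : C, T.η.app (x ⊗ y) ≫ σ2 x y = (T.η.app x ⊗ₘ T.η.app y))
    (BM4 : T.η.app (𝟙_ C) ≫ σ0 = 𝟙 (𝟙_ C)) :
    ∃ M : MonoidalCategory T.Algebra,
      (∀ X Y : T.Algebra,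
        (@MonoidalCategoryStruct.tensorObj T.Algebra _ M.toMonoidalCategoryStruct X Y).A =
          X.A ⊗ Y.A) ∧
      (∀ X Y : T.Algebra,
        HEq (@MonoidalCategoryStruct.tensorObj T.Algebra _ M.toMonoidalCategoryStruct X Y).a
          (σ2 X.A Y.A ≫ (X.a ⊗ₘ Y.a))) ∧
      ((@MonoidalCategoryStruct.tensorUnit T.Algebra _ M.toMonoidalCategoryStruct).A = 𝟙_ C) ∧
      (HEq (@MonoidalCategoryStruct.tensorUnit T.Algebra _ M.toMonoidalCategoryStruct).a σ0) ∧
      (∀ X Y Z : T.Algebra,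
        HEq (@MonoidalCategoryStruct.associator T.Algebra _ M.toMonoidalCategoryStruct
          X Y Z).hom.f (α_ X.A Y.A Z.A).hom) ∧
      (∀ X : T.Algebra,
        HEq (@MonoidalCategoryStruct.leftUnitor T.Algebra _ M.toMonoidalCategoryStruct
          X).hom.f (λ_ X.A).hom) ∧
      (∀ X : T.Algebra,
        HEq (@MonoidalCategoryStruct.rightUnitor T.Algebra _ M.toMonoidalCategoryStruct
          X).hom.f (ρ_ X.A).hom) := by
  exact ⟨BimonadAux.monoidal T ⟨σ2, σ0, σ2_natural, σ2_assoc, σ2_left_unit, σ2_right_unit,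
      BM1, BM2, BM3, BM4⟩,
    fun _ _ => rfl, fun _ _ => HEq.rfl, rfl, HEq.rfl,
    fun _ _ _ => HEq.rfl, fun _ => HEq.rfl, fun _ => HEq.rfl⟩
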